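/- Let Ω ⊆ ℝⁿ be invariant under every orthogonal transformation (canonical), B a symmetric n×n real matrix, z(B) = ∫_Ω exp(-mᵀBm) dm, and M = (1/z(B)) ∫_Ω exp(-mᵀBm) m mᵀ dm. Then M and B are simultaneously diagonalizable: there exists an orthogonal matrix U such that both UBUᵀ and UMUᵀ are diagonal. -/

import Mathlib

open MeasureTheory Matrix

/-- Change of variables by an orthogonal matrix over an orthogonally
invariant set preserves integrals of continuous functions. -/
lemma orth_change (n : ℕ) (Ω : Set (Fin n → ℝ)) (hΩmeas : MeasurableSet Ω)
    (hΩcanon : ∀ U : Matrix (Fin n) (Fin n) ℝ, U * Uᵀ = 1 →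
      ∀ m ∈ Ω, U.mulVec m ∈ Ω)
    (V : Matrix (Fin n) (Fin n) ℝ) (hV : V * Vᵀ = 1)
    (f : (Fin n → ℝ) → ℝ) (hf : Continuous f) :
    ∫ m in Ω, f m = ∫ m in Ω, f (V.mulVec m) := by
  have hdet2 : V.det * V.det = 1 := by
    have := congrArg Matrix.det hV
    simpa [Matrix.det_mul, Matrix.det_transpose] using this
  have hdet : V.det ≠ 0 := by
    intro h; rw [h] at hdet2; simp at hdet2
  have habs : |V.det⁻¹| = 1 := by
    rcases mul_self_eq_one_iff.mp hdet2 with h | h <;> rw [h] <;> norm_num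
  have hmap : Measure.map (Matrix.toLin' V) volume = volume := by
    rw [Real.map_matrix_volume_pi_eq_smul_volume_pi hdet, habs]
    simp
  have hVt : Vᵀ * Vᵀᵀ = 1 := by
    rwa [Matrix.transpose_transpose, mul_eq_one_comm]
  have hpre : (Matrix.toLin' V) ⁻¹' Ω = Ω := by
    ext m
    constructor
    · intro hm
      have := hΩcanon Vᵀ hVt _ hm
      simpa [Matrix.toLin'_apply, Matrix.mulVec_mulVec,
        mul_eq_one_comm.mp hV] using this
    · intro hm
      exact hΩcanon V hV m hm
  conv_lhs => rw [← hmap]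
  rw [setIntegral_map hΩmeas (hf.aestronglyMeasurable)
    ((Matrix.toLin' V).continuous_of_finiteDimensional.measurable.aemeasurable), hpre]
  simp [Matrix.toLin'_apply]

/-- If an orthogonal `W` fixes the quadratic form of `B`, it fixes the second
moment matrix `M`. -/
lemma moment_inv (n : ℕ) (Ω : Set (Fin n → ℝ)) (hΩmeas : MeasurableSet Ω)
    (hΩcanon : ∀ U : Matrix (Fin n) (Fin n) ℝ, U * Uᵀ = 1 →
      ∀ m ∈ Ω, U.mulVec m ∈ Ω)
    (B : Matrix (Fin n) (Fin n) ℝ)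
    (z : ℝ) (hzpos : 0 < z)
    (hint2 : ∀ i j, IntegrableOn
      (fun m => Real.exp (-(m ⬝ᵥ B.mulVec m)) * (m i * m j)) Ω volume)
    (M : Matrix (Fin n) (Fin n) ℝ)
    (hM : ∀ i j, M i j =
      (1 / z) * ∫ m in Ω, Real.exp (-(m ⬝ᵥ B.mulVec m)) * (m i * m j))
    (W : Matrix (Fin n) (Fin n) ℝ) (hW : W * Wᵀ = 1)
    (hWB : Wᵀ * B * W = B) :
    M = W * M * Wᵀ := by
  have hquad : ∀ m : Fin n → ℝ, (W *ᵥ m) ⬝ᵥ B *ᵥ (W *ᵥ m) = m ⬝ᵥ B *ᵥ m := by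
    intro m
    calc (W *ᵥ m) ⬝ᵥ B *ᵥ (W *ᵥ m)
        = (m ᵥ* Wᵀ) ⬝ᵥ (B * W) *ᵥ m := by rw [vecMul_transpose, mulVec_mulVec]
      _ = ((m ᵥ* Wᵀ) ᵥ* (B * W)) ⬝ᵥ m := by rw [dotProduct_mulVec]
      _ = (m ᵥ* (Wᵀ * (B * W))) ⬝ᵥ m := by rw [vecMul_vecMul]
      _ = (m ᵥ* B) ⬝ᵥ m := by rw [← Matrix.mul_assoc, hWB]
      _ = m ⬝ᵥ B *ᵥ m := by rw [← dotProduct_mulVec]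
  have hqcont : Continuous fun m : Fin n → ℝ => m ⬝ᵥ B *ᵥ m := by
    simp only [dotProduct, Matrix.mulVec]
    exact continuous_finset_sum _ fun k _ => (continuous_apply k).mul
      (continuous_finset_sum _ fun l _ => continuous_const.mul (continuous_apply l))
  have base : ∀ k l, (∫ m in Ω, Real.exp (-(m ⬝ᵥ B.mulVec m)) * (m k * m l)) = z * M k l := by
    intro k l
    rw [hM k l]
    field_simp
  ext i j
  have hcont : Continuous fun m : Fin n → ℝ =>
      Real.exp (-(m ⬝ᵥ B.mulVec m)) * (m i * m j) :=
    ((Real.continuous_exp.comp hqcont.neg)).mul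
      ((continuous_apply i).mul (continuous_apply j))
  have key := orth_change n Ω hΩmeas hΩcanon W hW _ hcont
  have expand : ∀ m : Fin n → ℝ,
      Real.exp (-((W *ᵥ m) ⬝ᵥ B *ᵥ (W *ᵥ m))) * ((W *ᵥ m) i * (W *ᵥ m) j)
        = ∑ k, ∑ l, W i k * W j l * (Real.exp (-(m ⬝ᵥ B *ᵥ m)) * (m k * m l)) := by
    intro m
    rw [hquad]
    have hm : ∀ a, (W *ᵥ m) a = ∑ k, W a k * m k := fun a => by
      simp [Matrix.mulVec, dotProduct]
    rw [hm i, hm j, Finset.sum_mul_sum, Finset.mul_sum]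
    refine Finset.sum_congr rfl fun k _ => ?_
    rw [Finset.mul_sum]
    exact Finset.sum_congr rfl fun l _ => by ring
  have hInt : ∀ k l, IntegrableOn
      (fun m => W i k * W j l * (Real.exp (-(m ⬝ᵥ B *ᵥ m)) * (m k * m l))) Ω volume :=
    fun k l => (hint2 k l).const_mul _
  have main : z * M i j = z * ((W * M * Wᵀ) i j) := by
    calc z * M i j
        = ∫ m in Ω, Real.exp (-(m ⬝ᵥ B.mulVec m)) * (m i * m j) := (base i j).symm
      _ = ∫ m in Ω, Real.exp (-((W *ᵥ m) ⬝ᵥ B *ᵥ (W *ᵥ m))) * ((W *ᵥ m) i * (W *ᵥ m) j) := key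
      _ = ∫ m in Ω, ∑ k, ∑ l, W i k * W j l *
            (Real.exp (-(m ⬝ᵥ B *ᵥ m)) * (m k * m l)) := by simp only [expand]
      _ = ∑ k, ∫ m in Ω, ∑ l, W i k * W j l *
            (Real.exp (-(m ⬝ᵥ B *ᵥ m)) * (m k * m l)) :=
          integral_finset_sum _ fun k _ => integrable_finset_sum _ fun l _ => hInt k l
      _ = ∑ k, ∑ l, ∫ m in Ω, W i k * W j l *
            (Real.exp (-(m ⬝ᵥ B *ᵥ m)) * (m k * m l)) :=
          Finset.sum_congr rfl fun k _ => integral_finset_sum _ fun l _ => hInt k l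
      _ = ∑ k, ∑ l, W i k * W j l * (z * M k l) := by
          refine Finset.sum_congr rfl fun k _ => Finset.sum_congr rfl fun l _ => ?_
          rw [show (fun m : Fin n → ℝ => W i k * W j l *
            (Real.exp (-(m ⬝ᵥ B *ᵥ m)) * (m k * m l)))
            = fun m => (W i k * W j l) * (Real.exp (-(m ⬝ᵥ B *ᵥ m)) * (m k * m l)) from rfl,
            MeasureTheory.integral_const_mul, base k l]
      _ = z * ((W * M * Wᵀ) i j) := by
          have hexp : (W * M * Wᵀ) i j = ∑ k, ∑ l, W i k * W j l * M k l := by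
            simp only [Matrix.mul_apply, Matrix.transpose_apply, Finset.sum_mul]
            rw [Finset.sum_comm]
            exact Finset.sum_congr rfl fun k _ =>
              Finset.sum_congr rfl fun l _ => by ring
          rw [hexp, Finset.mul_sum]
          refine Finset.sum_congr rfl fun k _ => ?_
          rw [Finset.mul_sum]
          exact Finset.sum_congr rfl fun l _ => by ring
  exact mul_left_cancel₀ hzpos.ne' main

theorem stmt_1 (n : ℕ) (Ω : Set (Fin n → ℝ)) (hΩmeas : MeasurableSet Ω)
    (hΩcanon : ∀ U : Matrix (Fin n) (Fin n) ℝ, U * Uᵀ = 1 →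
      ∀ m ∈ Ω, U.mulVec m ∈ Ω)
    (B : Matrix (Fin n) (Fin n) ℝ) (hB : B.IsSymm)
    (z : ℝ) (hz : z = ∫ m in Ω, Real.exp (-(m ⬝ᵥ B.mulVec m)))
    (hzpos : 0 < z)
    (hint : IntegrableOn (fun m => Real.exp (-(m ⬝ᵥ B.mulVec m))) Ω volume)
    (hint2 : ∀ i j, IntegrableOn
      (fun m => Real.exp (-(m ⬝ᵥ B.mulVec m)) * (m i * m j)) Ω volume)
    (M : Matrix (Fin n) (Fin n) ℝ)
    (hM : ∀ i j, M i j =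
      (1 / z) * ∫ m in Ω, Real.exp (-(m ⬝ᵥ B.mulVec m)) * (m i * m j)) :
    ∃ U : Matrix (Fin n) (Fin n) ℝ, U * Uᵀ = 1 ∧
      (U * B * Uᵀ).IsDiag ∧ (U * M * Uᵀ).IsDiag := by
  have hH : B.IsHermitian := by
    rw [Matrix.IsHermitian, Matrix.conjTranspose_eq_transpose_of_trivial]
    exact hB
  have hVmem : (hH.eigenvectorUnitary : Matrix (Fin n) (Fin n) ℝ) *
      star (hH.eigenvectorUnitary : Matrix (Fin n) (Fin n) ℝ) = 1 :=
    Matrix.mem_unitaryGroup_iff.mp hH.eigenvectorUnitary.2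
  have hVmem' : star (hH.eigenvectorUnitary : Matrix (Fin n) (Fin n) ℝ) *
      (hH.eigenvectorUnitary : Matrix (Fin n) (Fin n) ℝ) = 1 :=
    Matrix.mem_unitaryGroup_iff'.mp hH.eigenvectorUnitary.2
  have hstar : star (hH.eigenvectorUnitary : Matrix (Fin n) (Fin n) ℝ)
      = (hH.eigenvectorUnitary : Matrix (Fin n) (Fin n) ℝ)ᵀ := by
    rw [Matrix.star_eq_conjTranspose, Matrix.conjTranspose_eq_transpose_of_trivial]
  rw [hstar] at hVmem hVmem'
  set U : Matrix (Fin n) (Fin n) ℝ :=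
    (hH.eigenvectorUnitary : Matrix (Fin n) (Fin n) ℝ)ᵀ with hU
  have hUorth : U * Uᵀ = 1 := by rw [hU, Matrix.transpose_transpose]; exact hVmem'
  have hUorth' : Uᵀ * U = 1 := by rw [hU, Matrix.transpose_transpose]; exact hVmem
  have hdiagB : U * B * Uᵀ = Matrix.diagonal (RCLike.ofReal ∘ hH.eigenvalues) := by
    have := hH.conjStarAlgAut_star_eigenvectorUnitary
    rw [Unitary.conjStarAlgAut_star_apply] at this
    rw [hstar] at this
    rw [hU, Matrix.transpose_transpose]
    exact this
  refine ⟨U, hUorth, by rw [hdiagB]; exact Matrix.isDiag_diagonal _, ?_⟩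
  intro i j hij
  set d : Fin n → ℝ := fun k => if k = i then -1 else 1 with hd
  set D : Matrix (Fin n) (Fin n) ℝ := Matrix.diagonal d with hD
  have hDD : D * D = 1 := by
    rw [hD, Matrix.diagonal_mul_diagonal]
    ext a b
    by_cases h : a = b
    · subst h
      by_cases h2 : a = i <;>
        simp [Matrix.diagonal_apply_eq, Matrix.one_apply_eq, hd, h2]
    · simp [Matrix.diagonal_apply_ne _ h, Matrix.one_apply_ne h]
  have hDT : Dᵀ = D := by rw [hD, Matrix.diagonal_transpose]
  set W : Matrix (Fin n) (Fin n) ℝ := Uᵀ * D * U with hWdef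
  have hWT : Wᵀ = W := by
    rw [hWdef]
    simp [Matrix.transpose_mul, hDT, Matrix.mul_assoc]
  have hWW : W * W = 1 := by
    rw [hWdef]
    calc Uᵀ * D * U * (Uᵀ * D * U) = Uᵀ * (D * ((U * Uᵀ) * (D * U))) := by
          simp only [Matrix.mul_assoc]
      _ = Uᵀ * (D * (D * U)) := by rw [hUorth, Matrix.one_mul]
      _ = Uᵀ * ((D * D) * U) := by simp only [Matrix.mul_assoc]
      _ = Uᵀ * U := by rw [hDD, Matrix.one_mul]
      _ = 1 := hUorth'
  have hWorth : W * Wᵀ = 1 := by rw [hWT]; exact hWW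
  have hDBD : D * (U * B * Uᵀ) * D = U * B * Uᵀ := by
    rw [hdiagB, hD, Matrix.diagonal_mul_diagonal, Matrix.diagonal_mul_diagonal]
    ext a b
    by_cases h : a = b
    · subst h
      by_cases h2 : a = i <;>
        simp [Matrix.diagonal_apply_eq, hd, h2]
    · simp [Matrix.diagonal_apply_ne _ h]
  have hWB : Wᵀ * B * W = B := by
    rw [hWT, hWdef]
    have hB' : B = Uᵀ * (U * B * Uᵀ) * U := by
      calc B = (Uᵀ * U) * B * (Uᵀ * U) := by rw [hUorth']; simp
        _ = Uᵀ * (U * B * Uᵀ) * U := by simp only [Matrix.mul_assoc]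
    calc Uᵀ * D * U * B * (Uᵀ * D * U)
        = Uᵀ * (D * (U * B * Uᵀ) * D) * U := by simp only [Matrix.mul_assoc]
      _ = Uᵀ * (U * B * Uᵀ) * U := by rw [hDBD]
      _ = B := hB'.symm
  have hMW : M = W * M * Wᵀ :=
    moment_inv n Ω hΩmeas hΩcanon B z hzpos hint2 M hM W hWorth hWB
  have hUMU : U * M * Uᵀ = D * (U * M * Uᵀ) * D := by
    conv_lhs => rw [hMW, hWT, hWdef]
    calc U * (Uᵀ * D * U * M * (Uᵀ * D * U)) * Uᵀ
        = (U * Uᵀ) * (D * (U * M * Uᵀ) * D) * (U * Uᵀ) := by simp only [Matrix.mul_assoc]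
      _ = D * (U * M * Uᵀ) * D := by rw [hUorth, Matrix.one_mul, Matrix.mul_one]
  have hentry : (U * M * Uᵀ) i j = d i * (U * M * Uᵀ) i j * d j := by
    conv_lhs => rw [hUMU]
    rw [hD]
    rw [show (Matrix.diagonal d * (U * M * Uᵀ) * Matrix.diagonal d) i j
      = (Matrix.diagonal d * (U * M * Uᵀ)) i j * d j from Matrix.mul_diagonal _ _ _ _]
    rw [Matrix.diagonal_mul]
  have hdi : d i = -1 := by simp [hd]
  have hdj : d j = 1 := by simp [hd, (Ne.symm hij)]
  rw [hdi, hdj] at hentry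
  linarith
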